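/- Let G be a finite abelian group with |G| = m and let A ⊆ G. If R_A(g) ≤ 7 for all g ∈ G, then |S_4| ≤ 4|A| + 3|S_0| + 3, where |S_0| and |S_4| denote the number of elements g ∈ G with R_A(g) = 0 and R_A(g) = 4, respectively. -/
import Mathlib

/-- `repFn A g` is the number of ordered pairs `(a, a') ∈ A × A` with `a + a' = g`. -/
def repFn {G : Type*} [AddCommGroup G] [DecidableEq G] (A : Finset G) (g : G) : ℕ :=
  ((A ×ˢ A).filter fun p => p.1 + p.2 = g).card

section AuxLemmas

lemma even_card_invol {β : Type*} [DecidableEq β] (σ : β → β) :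
    ∀ F : Finset β, (∀ p ∈ F, σ p ∈ F) → (∀ p ∈ F, σ (σ p) = p) →
      (∀ p ∈ F, σ p ≠ p) → Even F.card := by
  intro F
  induction F using Finset.strongInduction with
  | _ F ih =>
    intro hmem hinv hne
    rcases Finset.eq_empty_or_nonempty F with rfl | ⟨p, hp⟩
    · simp
    · have hσp : σ p ∈ F.erase p := Finset.mem_erase.mpr ⟨hne p hp, hmem p hp⟩
      set F' := (F.erase p).erase (σ p) with hF'
      have hsub' : F' ⊆ F := (Finset.erase_subset _ _).trans (Finset.erase_subset _ _)
      have hpF' : p ∉ F' := by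
        simp [hF', Finset.mem_erase]
      have hmF' : ∀ q ∈ F', q ∈ F ∧ q ≠ p ∧ q ≠ σ p := by
        intro q hq
        simp [hF', Finset.mem_erase] at hq
        tauto
      have hcard : F.card = F'.card + 2 := by
        have h1 : (F.erase p).card = F.card - 1 := Finset.card_erase_of_mem hp
        have h2 : F'.card = (F.erase p).card - 1 := Finset.card_erase_of_mem hσp
        have h3 : 1 ≤ F.card := Finset.card_pos.mpr ⟨p, hp⟩
        have h4 : 1 ≤ (F.erase p).card := Finset.card_pos.mpr ⟨σ p, hσp⟩
        omega
      have hssub : F' ⊂ F := (Finset.ssubset_iff_of_subset hsub').mpr ⟨p, hp, hpF'⟩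
      have hev : Even F'.card := by
        refine ih F' hssub ?_ ?_ ?_
        · intro q hq
          obtain ⟨hqF, hqp, hqσp⟩ := hmF' q hq
          have h1 : σ q ∈ F := hmem q hqF
          have h2 : σ q ≠ p := by
            intro he
            apply hqσp
            rw [← he, hinv q hqF]
          have h3 : σ q ≠ σ p := by
            intro he
            apply hqp
            have := congrArg σ he
            rwa [hinv q hqF, hinv p hp] at this
          simp only [hF', Finset.mem_erase]
          exact ⟨h3, h2, h1⟩
        · intro q hq; exact hinv q (hmF' q hq).1
        · intro q hq; exact hne q (hmF' q hq).1
      obtain ⟨k, hk⟩ := hev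
      exact ⟨k + 1, by omega⟩

variable {G : Type*} [AddCommGroup G] [Fintype G] [DecidableEq G]

omit [AddCommGroup G] in
lemma aux_fiber_sum {β : Type*} (s : Finset β) (f : β → G) :
    ∑ g : G, (s.filter fun x => f x = g).card = s.card :=
  (Finset.card_eq_sum_card_fiberwise fun x _ => Finset.mem_univ (f x)).symm

omit [AddCommGroup G] in
lemma aux_fiber_sq_sum {β : Type*} [DecidableEq β] (s : Finset β) (f : β → G) :
    ∑ g : G, ((s.filter fun x => f x = g).card) ^ 2
      = ((s ×ˢ s).filter fun x => f x.1 = f x.2).card := by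
  rw [Finset.card_eq_sum_card_fiberwise
    (t := (Finset.univ : Finset G)) (f := fun x => f x.1)
    (fun x _ => Finset.mem_univ _)]
  refine Finset.sum_congr rfl fun g _ => ?_
  rw [Finset.filter_filter]
  have hset : ((s ×ˢ s).filter fun x => f x.1 = f x.2 ∧ f x.1 = g)
      = (s.filter fun a => f a = g) ×ˢ (s.filter fun a => f a = g) := by
    ext ⟨a, b⟩
    simp only [Finset.mem_filter, Finset.mem_product]
    constructor
    · rintro ⟨⟨ha, hb⟩, h1, h2⟩
      exact ⟨⟨ha, h2⟩, hb, by rw [← h1]; exact h2⟩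
    · rintro ⟨⟨ha, h1⟩, hb, h2⟩
      exact ⟨⟨ha, hb⟩, by rw [h1, h2], h1⟩
  rw [hset, Finset.card_product, sq]

/-- difference representation function -/
def diffFn (A : Finset G) (t : G) : ℕ := ((A ×ˢ A).filter fun p => p.1 - p.2 = t).card

/-- number of `a ∈ A` with `a + a = g` -/
def dblFn (A : Finset G) (g : G) : ℕ := (A.filter fun a => a + a = g).card

lemma sum_repFn (A : Finset G) : ∑ g : G, repFn A g = A.card * A.card := by
  have := aux_fiber_sum (A ×ˢ A) (fun p : G × G => p.1 + p.2)
  simpa [repFn, Finset.card_product] using this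

lemma sum_diffFn (A : Finset G) : ∑ t : G, diffFn A t = A.card * A.card := by
  have := aux_fiber_sum (A ×ˢ A) (fun p : G × G => p.1 - p.2)
  simpa [diffFn, Finset.card_product] using this

lemma sum_dblFn (A : Finset G) : ∑ g : G, dblFn A g = A.card := by
  have := aux_fiber_sum A (fun a : G => a + a)
  simpa [dblFn] using this

lemma diffFn_zero (A : Finset G) : diffFn A 0 = A.card := by
  unfold diffFn
  have hset : ((A ×ˢ A).filter fun p => p.1 - p.2 = 0) = A.diag := by
    ext ⟨a, b⟩
    simp only [Finset.mem_filter, Finset.mem_product, Finset.mem_diag, sub_eq_zero]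
    constructor
    · rintro ⟨⟨ha, hb⟩, hab⟩; exact ⟨ha, hab⟩
    · rintro ⟨ha, hab⟩; exact ⟨⟨ha, hab ▸ ha⟩, hab⟩
  rw [hset, Finset.diag_card]

lemma sum_sq_repFn_eq (A : Finset G) :
    ∑ g : G, (repFn A g) ^ 2 = ∑ t : G, (diffFn A t) ^ 2 := by
  have h1 := aux_fiber_sq_sum (A ×ˢ A) (fun p : G × G => p.1 + p.2)
  have h2 := aux_fiber_sq_sum (A ×ˢ A) (fun p : G × G => p.1 - p.2)
  have e1 : ∑ g : G, (repFn A g) ^ 2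
      = (((A ×ˢ A) ×ˢ (A ×ˢ A)).filter fun x => x.1.1 + x.1.2 = x.2.1 + x.2.2).card := by
    simpa [repFn] using h1
  have e2 : ∑ t : G, (diffFn A t) ^ 2
      = (((A ×ˢ A) ×ˢ (A ×ˢ A)).filter fun x => x.1.1 - x.1.2 = x.2.1 - x.2.2).card := by
    simpa [diffFn] using h2
  rw [e1, e2]
  refine Finset.card_bij'
    (fun x _ => ((x.1.1, x.2.2), (x.2.1, x.1.2)))
    (fun x _ => ((x.1.1, x.2.2), (x.2.1, x.1.2))) ?_ ?_ ?_ ?_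
  · rintro ⟨⟨a, b⟩, ⟨c, d⟩⟩ hx
    simp only [Finset.mem_filter, Finset.mem_product] at hx ⊢
    obtain ⟨⟨⟨ha, hb⟩, hc, hd⟩, he⟩ := hx
    exact ⟨⟨⟨ha, hd⟩, hc, hb⟩, by rw [sub_eq_sub_iff_add_eq_add]; exact he⟩
  · rintro ⟨⟨a, b⟩, ⟨c, d⟩⟩ hx
    simp only [Finset.mem_filter, Finset.mem_product] at hx ⊢
    obtain ⟨⟨⟨ha, hb⟩, hc, hd⟩, he⟩ := hx
    exact ⟨⟨⟨ha, hd⟩, hc, hb⟩, (sub_eq_sub_iff_add_eq_add).mp he⟩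
  · rintro ⟨⟨a, b⟩, ⟨c, d⟩⟩ _; rfl
  · rintro ⟨⟨a, b⟩, ⟨c, d⟩⟩ _; rfl

lemma dbl_pos_of_odd (A : Finset G) (g : G) (hodd : ¬ Even (repFn A g)) :
    1 ≤ dblFn A g := by
  by_contra hcon
  push_neg at hcon
  have hz : dblFn A g = 0 := by omega
  have hempty : (A.filter fun a => a + a = g) = ∅ := Finset.card_eq_zero.mp hz
  have hnodbl : ∀ a ∈ A, ¬ (a + a = g) := by
    intro a ha hag
    have : a ∈ (A.filter fun a => a + a = g) := Finset.mem_filter.mpr ⟨ha, hag⟩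
    rw [hempty] at this
    exact absurd this (Finset.notMem_empty a)
  apply hodd
  refine even_card_invol (fun p : G × G => (p.2, p.1))
    ((A ×ˢ A).filter fun p => p.1 + p.2 = g) ?_ ?_ ?_
  · rintro ⟨a, b⟩ hp
    simp only [Finset.mem_filter, Finset.mem_product] at hp ⊢
    exact ⟨⟨hp.1.2, hp.1.1⟩, by rw [add_comm]; exact hp.2⟩
  · rintro ⟨a, b⟩ _; rfl
  · rintro ⟨a, b⟩ hp hfix
    simp only [Finset.mem_filter, Finset.mem_product] at hp
    have hab : b = a := congrArg Prod.fst hfix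
    exact hnodbl a hp.1.1 (by rw [← hp.2, hab])

lemma pointwise_bound (A : Finset G) (g : G) (h7 : repFn A g ≤ 7) :
    4 * (if repFn A g = 4 then (1 : ℤ) else 0)
      ≤ 8 * (repFn A g : ℤ) - (repFn A g : ℤ) ^ 2
        - 12 * (if repFn A g = 0 then (0 : ℤ) else 1) + 5 * (dblFn A g : ℤ) := by
  have h1 : repFn A g = 1 → 1 ≤ dblFn A g := fun hh =>
    dbl_pos_of_odd A g (by rw [hh]; decide)
  have h7' : repFn A g = 7 → 1 ≤ dblFn A g := fun hh =>
    dbl_pos_of_odd A g (by rw [hh]; decide)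
  have hd : (0:ℤ) ≤ (dblFn A g : ℤ) := Int.natCast_nonneg _
  interval_cases hR : (repFn A g) <;> simp_all <;> omega

end AuxLemmas

theorem stmt_7 {G : Type*} [AddCommGroup G] [Fintype G] [DecidableEq G]
    (m : ℕ) (hm : Fintype.card G = m) (A : Finset G)
    (h : ∀ g : G, repFn A g ≤ 7) :
    (Finset.univ.filter fun g : G => repFn A g = 4).card ≤
      4 * A.card + 3 * (Finset.univ.filter fun g : G => repFn A g = 0).card + 3 := by
  classical
  -- cast identities
  have hRsum : ∑ g : G, (repFn A g : ℤ) = (A.card : ℤ) * A.card := by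
    have := congrArg (Nat.cast : ℕ → ℤ) (sum_repFn A)
    push_cast at this
    exact this
  have hDsum : ∑ t : G, (diffFn A t : ℤ) = (A.card : ℤ) * A.card := by
    have := congrArg (Nat.cast : ℕ → ℤ) (sum_diffFn A)
    push_cast at this
    exact this
  have hdbl : ∑ g : G, (dblFn A g : ℤ) = (A.card : ℤ) := by
    have := congrArg (Nat.cast : ℕ → ℤ) (sum_dblFn A)
    push_cast at this
    exact this
  have hsq : ∑ g : G, (repFn A g : ℤ) ^ 2 = ∑ t : G, (diffFn A t : ℤ) ^ 2 := by
    have := congrArg (Nat.cast : ℕ → ℤ) (sum_sq_repFn_eq A)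
    push_cast at this
    exact this
  have hd0 : (diffFn A 0 : ℤ) = (A.card : ℤ) := by rw [diffFn_zero]
  -- Key inequality from ∑_{t ≠ 0} (D t - 3)(D t - 4) ≥ 0
  have hterm : ∀ t : G, (0 : ℤ) ≤ ((diffFn A t : ℤ) - 3) * ((diffFn A t : ℤ) - 4) := by
    intro t
    rcases le_or_gt (diffFn A t) 3 with hd | hd
    · have h1 : (diffFn A t : ℤ) ≤ 3 := by exact_mod_cast hd
      nlinarith
    · have h1 : (4 : ℤ) ≤ (diffFn A t : ℤ) := by exact_mod_cast hd
      nlinarith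
  have hsum0 : (0 : ℤ) ≤ ∑ t ∈ Finset.univ.erase (0 : G),
      ((diffFn A t : ℤ) - 3) * ((diffFn A t : ℤ) - 4) :=
    Finset.sum_nonneg fun t _ => hterm t
  have herase : (∑ t ∈ Finset.univ.erase (0 : G),
        ((diffFn A t : ℤ) - 3) * ((diffFn A t : ℤ) - 4))
      + ((diffFn A 0 : ℤ) - 3) * ((diffFn A 0 : ℤ) - 4)
      = ∑ t : G, ((diffFn A t : ℤ) - 3) * ((diffFn A t : ℤ) - 4) :=
    Finset.sum_erase_add _ _ (Finset.mem_univ 0)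
  have hexpand : ∑ t : G, ((diffFn A t : ℤ) - 3) * ((diffFn A t : ℤ) - 4)
      = (∑ t : G, (diffFn A t : ℤ) ^ 2) - 7 * (∑ t : G, (diffFn A t : ℤ))
        + 12 * (Fintype.card G : ℤ) := by
    have hh : ∀ t : G, ((diffFn A t : ℤ) - 3) * ((diffFn A t : ℤ) - 4)
        = (diffFn A t : ℤ) ^ 2 - 7 * (diffFn A t : ℤ) + 12 := fun t => by ring
    rw [Finset.sum_congr rfl fun t _ => hh t, Finset.sum_add_distrib,
      Finset.sum_sub_distrib, ← Finset.mul_sum, Finset.sum_const, Finset.card_univ]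
    push_cast
    ring
  have hnn : ((A.card : ℤ) - 3) * ((A.card : ℤ) - 4)
      = (A.card : ℤ) * A.card - 7 * A.card + 12 := by ring
  have hkey : 8 * (A.card : ℤ) * A.card - 7 * A.card - 12 * (Fintype.card G : ℤ) + 12
      ≤ ∑ g : G, (repFn A g : ℤ) ^ 2 := by
    rw [hexpand, hDsum] at herase
    rw [hd0, hnn] at herase
    rw [hsq]
    linarith [hsum0, herase]
  -- sum the pointwise bound
  have hpt := Finset.sum_le_sum fun g (_ : g ∈ (Finset.univ : Finset G)) =>
    pointwise_bound A g (h g)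
  have hL : ∑ g : G, 4 * (if repFn A g = 4 then (1 : ℤ) else 0)
      = 4 * ((Finset.univ.filter fun g : G => repFn A g = 4).card : ℤ) := by
    rw [← Finset.mul_sum, Finset.sum_boole]
  have hone : ∑ g : G, (if repFn A g = 0 then (0 : ℤ) else 1)
      = (Fintype.card G : ℤ)
        - ((Finset.univ.filter fun g : G => repFn A g = 0).card : ℤ) := by
    have hthis : ∀ g : G, (if repFn A g = 0 then (0 : ℤ) else 1)
        = 1 - (if repFn A g = 0 then 1 else 0) := by
      intro g; by_cases hh : repFn A g = 0 <;> simp [hh]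
    rw [Finset.sum_congr rfl fun g _ => hthis g, Finset.sum_sub_distrib,
      Finset.sum_const, Finset.card_univ, Finset.sum_boole]
    simp [nsmul_eq_mul]
  have hR : ∑ g : G, (8 * (repFn A g : ℤ) - (repFn A g : ℤ) ^ 2
        - 12 * (if repFn A g = 0 then (0 : ℤ) else 1) + 5 * (dblFn A g : ℤ))
      = 8 * ((A.card : ℤ) * A.card) - (∑ g : G, (repFn A g : ℤ) ^ 2)
        - 12 * ((Fintype.card G : ℤ)
          - ((Finset.univ.filter fun g : G => repFn A g = 0).card : ℤ))
        + 5 * (A.card : ℤ) := by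
    rw [Finset.sum_add_distrib, Finset.sum_sub_distrib, Finset.sum_sub_distrib,
      ← Finset.mul_sum, ← Finset.mul_sum, ← Finset.mul_sum, hRsum, hone, hdbl]
  rw [hL, hR] at hpt
  have hfin : (((Finset.univ.filter fun g : G => repFn A g = 4).card : ℤ))
      ≤ 4 * (A.card : ℤ)
        + 3 * ((Finset.univ.filter fun g : G => repFn A g = 0).card : ℤ) + 3 := by
    linarith
  exact_mod_cast hfin
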